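/- Span decomposition of the trained parameters: in the analogical-reasoning training (any of the layer-wise gradient-descent schedules on datasets built from S₁, S₂, S₃), for every iteration t, every i ∈ [N], every k ∈ [d], l, h ∈ [m] and q ∈ {1,2}, there exist real coefficients γ^(t)_{i,k,l}, ρ^(t)_{i,k,l}, ζ^(t)_{q,k,l}, β^(t)_{1,k,l,q,h}, β^(t)_{2,k,l,j}, β^(t)_{3,k,l,j}, β^(t)_{4,k,l,q} such that V^(t)a_i = Σ_{k,l} γ^(t)_{i,k,l} w⁽⁰⁾_{k,l} + V⁽⁰⁾a_i, V^(t)a'_i = Σ_{k,l} ρ^(t)_{i,k,l} w⁽⁰⁾_{k,l} + V⁽⁰⁾a'_i, V^(t)r_q = Σ_{k,l} ζ^(t)_{q,k,l} w⁽⁰⁾_{k,l} + V⁽⁰⁾r_q, and w^(t)_{k,l} = Σ_{q,h} β^(t)_{1,k,l,q,h} w⁽⁰⁾_{q,h} + Σ_{j=1}^N β^(t)_{2,k,l,j} V⁽⁰⁾a_j + Σ_{j=1}^N β^(t)_{3,k,l,j} V⁽⁰⁾a'_j + Σ_{q∈[2]} β^(t)_{4,k,l,q} V⁽⁰⁾r_q;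 i.e., every parameter update remains in the linear span of the initialization vectors. -/

import Mathlib

open MeasureTheory ProbabilityTheory Real
open scoped RealInnerProductSpace ENNReal

noncomputable section

/-- Vectors in `ℝ^d`. -/
abbrev Vec (d : ℕ) := EuclideanSpace ℝ (Fin d)
/-- `d × d` matrices, viewed as a Euclidean (Hilbert) space so that gradients make sense. -/
abbrev Mat (d : ℕ) := EuclideanSpace ℝ (Fin d × Fin d)
/-- Feature-layer parameters `W = (w_{k,l})_{k ∈ [d], l ∈ [m]}`, each `w_{k,l} ∈ ℝ^d`. -/
abbrev WMat (d m : ℕ) := EuclideanSpace ℝ ((Fin d × Fin m) × Fin d)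
/-- A training sample: the two token embeddings `X = [x₁ x₂]` and a label `y ∈ [d]`. -/
abbrev Sample (d : ℕ) := (Vec d × Vec d) × Fin d

/-- Softmax of a finite family of scores. -/
def softmax {ι : Type*} [Fintype ι] (s : ι → ℝ) (k : ι) : ℝ :=
  Real.exp (s k) / ∑ j, Real.exp (s j)

/-- Matrix-vector multiplication for `Mat d`. -/
def matVec {d : ℕ} (Z : Mat d) (v : Vec d) : Vec d := WithLp.toLp 2 (fun i => ∑ j, Z (i, j) * v j)

/-- Attention scores `α(Z,X) = softmax(Xᵀ Z x₂ / √d) ∈ ℝ²`. -/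
def attScore {d : ℕ} (Z : Mat d) (x₁ x₂ : Vec d) : Fin 2 → ℝ :=
  softmax (fun j =>
    (∑ i, (if j = 0 then x₁ i else x₂ i) * matVec Z x₂ i) / Real.sqrt d)

/-- `x_a(Z,X) = X α(Z,X)`. -/
def xAttn {d : ℕ} (Z : Mat d) (x₁ x₂ : Vec d) : Vec d :=
  WithLp.toLp 2 (fun i => attScore Z x₁ x₂ 0 * x₁ i + attScore Z x₁ x₂ 1 * x₂ i)

/-- Attention output `o₁(Z,V,X) = V X α(Z,X)`. -/
def attnOut {d : ℕ} (Z V : Mat d) (x₁ x₂ : Vec d) : Vec d := matVec V (xAttn Z x₁ x₂)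

/-- Model output `f(Z,V,W,X) ∈ ℝ^d`, `f_k = (λ/m) Σ_{l=1}^m ⟨w_{k,l}, o₁(Z,V,X)⟩`. -/
def fOut {d m : ℕ} (lam : ℝ) (Z V : Mat d) (W : WMat d m) (x₁ x₂ : Vec d) : Fin d → ℝ :=
  fun k => (lam / (m : ℝ)) * ∑ l : Fin m, ∑ i, W ((k, l), i) * attnOut Z V x₁ x₂ i

/-- Per-sample cross-entropy loss `L(Z,V,W,X,y) = −log softmax(f(Z,V,W,X))_y`. -/
def sampleLoss {d m : ℕ} (lam : ℝ) (Z V : Mat d) (W : WMat d m) (s : Sample d) : ℝ :=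
  - Real.log (softmax (fOut lam Z V W s.1.1 s.1.2) s.2)

/-- Training loss: the average per-sample loss over the (multiset) dataset `data`. -/
def trainLoss {d m : ℕ} (lam : ℝ) {ι : Type*} [Fintype ι]
    (data : ι → Sample d) (Z V : Mat d) (W : WMat d m) : ℝ :=
  (∑ s : ι, sampleLoss lam Z V W (data s)) / (Fintype.card ι : ℝ)

/-- Misclassification: `f_y < max_{k ≠ y} f_k`. -/
def misclass {d m : ℕ} (lam : ℝ) (Z V : Mat d) (W : WMat d m) (s : Sample d) : Prop :=
  ∃ k, k ≠ s.2 ∧ fOut lam Z V W s.1.1 s.1.2 s.2 < fOut lam Z V W s.1.1 s.1.2 k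

/-- Zero-one test error: the average over test samples of the probability (over the
randomness `ω`) that the true-class score is below some other class score. -/
def testErr01 {d m : ℕ} {Ω : Type*} [MeasurableSpace Ω] (P : Measure Ω) (lam : ℝ)
    {ι : Type*} [Fintype ι] (data : ι → Ω → Sample d)
    (Z V : Ω → Mat d) (W : Ω → WMat d m) : ℝ :=
  (∑ s : ι, (P {ω | misclass lam (Z ω) (V ω) (W ω) (data s ω)}).toReal) /
    (Fintype.card ι : ℝ)

/-- The layer-wise gradient-descent trajectory: for `t < T₁` (Stage 1 / attention training),
`Z` and `V` are updated by full-batch gradient descent on `data₁` with `W` frozen; for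
`T₁ ≤ t < T₁ + T₂`, only `W` is updated on `data₁`; for `t ≥ T₁ + T₂`, only `W` is updated
on `data₂` (this last phase is used by the sequential curricula). -/
def IsGDTraj {d m : ℕ} {Ω : Type*} (lam η : ℝ) {ι₁ ι₂ : Type*} [Fintype ι₁] [Fintype ι₂]
    (data₁ : Ω → ι₁ → Sample d) (data₂ : Ω → ι₂ → Sample d) (T₁ T₂ : ℕ)
    (ZT VT : ℕ → Ω → Mat d) (WT : ℕ → Ω → WMat d m) : Prop :=
  ∀ ω t,
    (t < T₁ →
      ZT (t + 1) ω = ZT t ω -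
          η • gradient (fun Z => trainLoss lam (data₁ ω) Z (VT t ω) (WT t ω)) (ZT t ω) ∧
      VT (t + 1) ω = VT t ω -
          η • gradient (fun V => trainLoss lam (data₁ ω) (ZT t ω) V (WT t ω)) (VT t ω) ∧
      WT (t + 1) ω = WT t ω) ∧
    (T₁ ≤ t → ZT (t + 1) ω = ZT t ω ∧ VT (t + 1) ω = VT t ω) ∧
    (T₁ ≤ t → t < T₁ + T₂ →
      WT (t + 1) ω = WT t ω -
          η • gradient (fun W => trainLoss lam (data₁ ω) (ZT t ω) (VT t ω) W) (WT t ω)) ∧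
    (T₁ + T₂ ≤ t →
      WT (t + 1) ω = WT t ω -
          η • gradient (fun W => trainLoss lam (data₂ ω) (ZT t ω) (VT t ω) W) (WT t ω))

/-- Index of all scalar initialization entries of `(Z⁰, V⁰, W⁰)`. -/
abbrev InitIdx (d m : ℕ) := (Fin d × Fin d) ⊕ ((Fin d × Fin d) ⊕ ((Fin d × Fin m) × Fin d))

/-- All initialization entries, bundled as one family of real random variables. -/
def initEntries {d m : ℕ} {Ω : Type*} (Z0 V0 : Ω → Mat d) (W0 : Ω → WMat d m) :
    InitIdx d m → Ω → ℝ :=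
  Sum.elim (fun p ω => Z0 ω p) (Sum.elim (fun p ω => V0 ω p) (fun p ω => W0 ω p))

/-- The entries of `Z⁰, V⁰` and of all `w⁰_{k,l}` are i.i.d. `N(0, σ₀²)`. -/
def GaussianInit {d m : ℕ} {Ω : Type*} [MeasurableSpace Ω] (P : Measure Ω) (σ₀ : ℝ)
    (Z0 V0 : Ω → Mat d) (W0 : Ω → WMat d m) : Prop :=
  Measurable Z0 ∧ Measurable V0 ∧ Measurable W0 ∧
  iIndepFun (initEntries Z0 V0 W0) P ∧
  ∀ idx, P.map (initEntries Z0 V0 W0 idx) = gaussianReal 0 (Real.toNNReal (σ₀ ^ 2))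

/-- A family of random vectors drawn as a uniformly random orthonormal system:
it is (surely) orthonormal and its joint law is invariant under every rotation of `ℝ^d`. -/
def RandomOrthonormal {d : ℕ} {Ω : Type*} [MeasurableSpace Ω] (P : Measure Ω)
    {J : Type*} (e : J → Ω → Vec d) : Prop :=
  (∀ j, Measurable (e j)) ∧
  (∀ ω, Orthonormal ℝ (fun j => e j ω)) ∧
  ∀ Q : Vec d ≃ₗᵢ[ℝ] Vec d,
    P.map (fun ω => fun j => Q (e j ω)) = P.map (fun ω => fun j => e j ω)

/-- Condition 1 of the paper, with universal constant `C`. -/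
def Condition1 (C : ℝ) (d N m n : ℕ) (lam σ₀ η δ : ℝ) : Prop :=
  C * max (Real.log (4 * (m : ℝ) * d / δ)) ((m : ℝ) ^ 3 * n * (N : ℝ) ^ 2 / lam ^ 6) ≤ (d : ℝ) ∧
  σ₀ ≤ C⁻¹ * Real.sqrt ((n : ℝ) * m) * Real.log d / ((d : ℝ) * lam) ∧
  η ≤ (C * (N : ℝ) * m * d * σ₀ ^ 2 * Real.log d ^ 2 / lam ^ 2)⁻¹

/-- The bundled family of token embeddings `{a_i, a'_i}_{i=1}^N ∪ {r₁, r₂}`. -/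
def embFam {d N : ℕ} {Ω : Type*} (a a' : Fin N → Ω → Vec d) (r₁ r₂ : Ω → Vec d) :
    (Fin N ⊕ (Fin N ⊕ Fin 2)) → Ω → Vec d :=
  Sum.elim a (Sum.elim a' ![r₁, r₂])

/-- Index type of the multiset `⊎_{k=1}^κ (S₁ ∪ S₂) ⊎ S₃` (its cardinality is `(2κ+1)N`). -/
abbrev JointIdx (κ N : ℕ) := (Fin κ × Fin N) ⊕ ((Fin κ × Fin N) ⊕ Fin N)

/-- The joint training multiset: `κ` copies of `S₁ = {([a_i r₁], I(b_i))}` and of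
`S₂ = {([a'_i r₁], I(b_i))}`, together with one copy of `S₃ = {([a'_i r₂], I(c_i))}`. -/
def jointData {d N : ℕ} (κ : ℕ) (a a' : Fin N → Vec d) (r₁ r₂ : Vec d)
    (Ib Ic : Fin N → Fin d) : JointIdx κ N → Sample d :=
  Sum.elim (fun p => ((a p.2, r₁), Ib p.2))
    (Sum.elim (fun p => ((a' p.2, r₁), Ib p.2)) (fun i => ((a' i, r₂), Ic i)))

/-- the vector `w_{k,l}` inside the stacked feature-layer parameters -/
def wRow {d m : ℕ} (W : WMat d m) (k : Fin d) (l : Fin m) : Vec d := WithLp.toLp 2 (fun p : Fin d => (W ((k, l), p) : ℝ))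

section AuxSpanLemmas

open InnerProductSpace

lemma aux_inner_gradient_eq {F : Type*} [NormedAddCommGroup F] [InnerProductSpace ℝ F]
    [CompleteSpace F] (f : F → ℝ) (x y : F) :
    @inner ℝ _ _ (gradient f x) y = fderiv ℝ f x y := by
  simp [gradient, InnerProductSpace.toDual_symm_apply]

lemma aux_gradient_mem_span {F : Type*} [NormedAddCommGroup F] [InnerProductSpace ℝ F]
    [FiniteDimensional ℝ F] {ι : Type*} (f : F → ℝ) (x : F) (v : ι → F)
    (hinv : ∀ h : F, (∀ i, @inner ℝ _ _ (v i) h = 0) → f (x + h) = f x) :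
    gradient f x ∈ Submodule.span ℝ (Set.range v) := by
  set K := Submodule.span ℝ (Set.range v) with hK
  rw [← Submodule.orthogonal_orthogonal K]
  rw [Submodule.mem_orthogonal]
  intro h hh
  rw [real_inner_comm, aux_inner_gradient_eq]
  have hconst : ∀ t : ℝ, f (x + t • h) = f x := by
    intro t
    apply hinv
    intro i
    have h0 : @inner ℝ _ _ (v i) h = 0 :=
      (Submodule.mem_orthogonal K h).mp hh (v i) (Submodule.subset_span ⟨i, rfl⟩)
    rw [inner_smul_right, h0, mul_zero]
  by_cases hdiff : DifferentiableAt ℝ f x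
  · have hline : HasDerivAt (fun t : ℝ => x + t • h) h 0 := by
      simpa using ((hasDerivAt_id (0:ℝ)).smul_const h).const_add x
    have hcomp : HasDerivAt (fun t : ℝ => f (x + t • h)) (fderiv ℝ f x h) 0 := by
      have h0 : HasFDerivAt f (fderiv ℝ f x) (x + (0:ℝ) • h) := by
        simpa using hdiff.hasFDerivAt
      exact h0.comp_hasDerivAt 0 hline
    have hc : HasDerivAt (fun t : ℝ => f (x + t • h)) 0 0 := by
      have he : (fun t : ℝ => f (x + t • h)) = fun _ => f x := funext hconst
      rw [he]; exact hasDerivAt_const _ _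
    exact hcomp.unique hc
  · rw [fderiv_zero_of_not_differentiableAt hdiff]; rfl

lemma matVec_add_left {d : ℕ} (M M' : Mat d) (x : Vec d) :
    matVec (M + M') x = matVec M x + matVec M' x := by
  ext i
  simp [matVec, PiLp.add_apply, add_mul, Finset.sum_add_distrib]

lemma matVec_smul_left {d : ℕ} (c : ℝ) (M : Mat d) (x : Vec d) :
    matVec (c • M) x = c • matVec M x := by
  ext i
  simp [matVec, PiLp.smul_apply, smul_eq_mul, Finset.mul_sum, mul_assoc]

lemma matVec_sub_left {d : ℕ} (M M' : Mat d) (x : Vec d) :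
    matVec (M - M') x = matVec M x - matVec M' x := by
  ext i
  simp [matVec, PiLp.sub_apply, sub_mul, Finset.sum_sub_distrib]

lemma wRow_sub {d m : ℕ} (W W' : WMat d m) (k : Fin d) (l : Fin m) :
    wRow (W - W') k l = wRow W k l - wRow W' k l := by
  ext p; simp [wRow, PiLp.sub_apply]

lemma wRow_smul {d m : ℕ} (c : ℝ) (W : WMat d m) (k : Fin d) (l : Fin m) :
    wRow (c • W) k l = c • wRow W k l := by
  ext p; simp [wRow, PiLp.smul_apply]

def matVecL {d : ℕ} (x : Vec d) : Mat d →ₗ[ℝ] Vec d where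
  toFun M := matVec M x
  map_add' M M' := matVec_add_left M M' x
  map_smul' c M := matVec_smul_left c M x

def wRowL {d m : ℕ} (k : Fin d) (l : Fin m) : WMat d m →ₗ[ℝ] Vec d where
  toFun W := wRow W k l
  map_add' W W' := by ext p; simp [wRow, PiLp.add_apply]
  map_smul' c W := by ext p; simp [wRow, PiLp.smul_apply]

lemma linmap_span_range {E F : Type*} [AddCommGroup E] [Module ℝ E] [AddCommGroup F] [Module ℝ F]
    {ι : Type*} (L : E →ₗ[ℝ] F) (v : ι → E) (x : E) (S : Submodule ℝ F)
    (hx : x ∈ Submodule.span ℝ (Set.range v)) (hv : ∀ i, L (v i) ∈ S) : L x ∈ S := by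
  have h1 : L x ∈ Submodule.map L (Submodule.span ℝ (Set.range v)) := ⟨x, hx, rfl⟩
  rw [← Submodule.span_image] at h1
  refine Submodule.span_le.mpr ?_ h1
  rintro y ⟨e, ⟨i, rfl⟩, rfl⟩
  exact hv i

lemma matVec_xAttn {d : ℕ} (M Z : Mat d) (x₁ x₂ : Vec d) :
    matVec M (xAttn Z x₁ x₂)
      = attScore Z x₁ x₂ 0 • matVec M x₁ + attScore Z x₁ x₂ 1 • matVec M x₂ := by
  ext i
  simp only [matVec, xAttn, PiLp.add_apply, PiLp.smul_apply, smul_eq_mul, Finset.mul_sum]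
  rw [← Finset.sum_add_distrib]
  refine Finset.sum_congr rfl fun j _ => by ring

lemma trainLoss_V_inv {d m : ℕ} {ι : Type*} [Fintype ι] (lam : ℝ) (data : ι → Sample d)
    (Z V H : Mat d) (W : WMat d m)
    (hH : ∀ (k : Fin d) (l : Fin m) (s : ι),
      ∑ i, W ((k, l), i) * matVec H (xAttn Z (data s).1.1 (data s).1.2) i = 0) :
    trainLoss lam data Z (V + H) W = trainLoss lam data Z V W := by
  have hs : ∀ s : ι, sampleLoss lam Z (V + H) W (data s) = sampleLoss lam Z V W (data s) := by
    intro s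
    simp only [sampleLoss]
    have hf : fOut lam Z (V + H) W (data s).1.1 (data s).1.2
        = fOut lam Z V W (data s).1.1 (data s).1.2 := by
      funext k
      unfold fOut
      congr 1
      refine Finset.sum_congr rfl fun l _ => ?_
      have ho : ∀ i, attnOut Z (V + H) (data s).1.1 (data s).1.2 i
          = attnOut Z V (data s).1.1 (data s).1.2 i
            + matVec H (xAttn Z (data s).1.1 (data s).1.2) i := by
        intro i
        rw [attnOut, attnOut, matVec_add_left]
        simp [PiLp.add_apply]
      calc ∑ i, W ((k, l), i) * attnOut Z (V + H) (data s).1.1 (data s).1.2 i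
          = (∑ i, W ((k, l), i) * attnOut Z V (data s).1.1 (data s).1.2 i)
            + ∑ i, W ((k, l), i) * matVec H (xAttn Z (data s).1.1 (data s).1.2) i := by
            rw [← Finset.sum_add_distrib]
            refine Finset.sum_congr rfl fun i _ => by rw [ho i]; ring
        _ = _ := by rw [hH k l s, add_zero]
    rw [hf]
  simp only [trainLoss, hs]

lemma trainLoss_W_inv {d m : ℕ} {ι : Type*} [Fintype ι] (lam : ℝ) (data : ι → Sample d)
    (Z V : Mat d) (W H : WMat d m)
    (hH : ∀ (k : Fin d) (l : Fin m) (s : ι),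
      ∑ i, H ((k, l), i) * attnOut Z V (data s).1.1 (data s).1.2 i = 0) :
    trainLoss lam data Z V (W + H) = trainLoss lam data Z V W := by
  have hs : ∀ s : ι, sampleLoss lam Z V (W + H) (data s) = sampleLoss lam Z V W (data s) := by
    intro s
    simp only [sampleLoss]
    have hf : fOut lam Z V (W + H) (data s).1.1 (data s).1.2
        = fOut lam Z V W (data s).1.1 (data s).1.2 := by
      funext k
      unfold fOut
      congr 1
      refine Finset.sum_congr rfl fun l _ => ?_
      calc ∑ i, (W + H) ((k, l), i) * attnOut Z V (data s).1.1 (data s).1.2 i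
          = (∑ i, W ((k, l), i) * attnOut Z V (data s).1.1 (data s).1.2 i)
            + ∑ i, H ((k, l), i) * attnOut Z V (data s).1.1 (data s).1.2 i := by
            rw [← Finset.sum_add_distrib]
            refine Finset.sum_congr rfl fun i _ => by simp [PiLp.add_apply]; ring
        _ = _ := by rw [hH k l s, add_zero]
    rw [hf]
  simp only [trainLoss, hs]

lemma gradV_mem {d m : ℕ} {ι : Type*} [Fintype ι] (lam : ℝ) (data : ι → Sample d)
    (Z V : Mat d) (W : WMat d m) (x : Vec d) :
    matVec (gradient (fun V' => trainLoss lam data Z V' W) V) x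
      ∈ Submodule.span ℝ (Set.range (fun p : Fin d × Fin m => wRow W p.1 p.2)) := by
  set u : ι → Vec d := fun s => xAttn Z (data s).1.1 (data s).1.2 with hu
  set v : (Fin d × Fin m) × ι → Mat d :=
    fun r => WithLp.toLp 2 (fun p : Fin d × Fin d => W (r.1, p.1) * u r.2 p.2) with hv
  have hinner : ∀ (r : (Fin d × Fin m) × ι) (h : Mat d),
      @inner ℝ _ _ (v r) h = ∑ p : Fin d × Fin d, W (r.1, p.1) * u r.2 p.2 * h p := by
    intro r h
    simp [PiLp.inner_apply, RCLike.inner_apply, starRingEnd_apply, star_trivial, hv]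
    exact Finset.sum_congr rfl fun _ _ => by ring
  have hinv : ∀ h : Mat d, (∀ r, @inner ℝ _ _ (v r) h = 0) →
      (fun V' => trainLoss lam data Z V' W) (V + h)
        = (fun V' => trainLoss lam data Z V' W) V := by
    intro h hh
    apply trainLoss_V_inv
    intro k l s
    have h0 := hh ((k, l), s)
    rw [hinner] at h0
    calc ∑ i, W ((k, l), i) * matVec h (u s) i
        = ∑ p : Fin d × Fin d, W ((k, l), p.1) * u s p.2 * h p := by
          rw [Fintype.sum_prod_type]
          refine Finset.sum_congr rfl fun i _ => ?_
          simp only [matVec, Finset.mul_sum]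
          refine Finset.sum_congr rfl fun j _ => by ring
      _ = 0 := h0
  have hg := aux_gradient_mem_span (fun V' => trainLoss lam data Z V' W) V v hinv
  refine linmap_span_range (matVecL x) v _ _ hg ?_
  rintro ⟨⟨k, l⟩, s⟩
  have heq : matVecL x (v ((k, l), s)) = (∑ j, u s j * x j) • wRow W k l := by
    ext i
    simp only [matVecL, LinearMap.coe_mk, AddHom.coe_mk, matVec, hv, wRow,
      PiLp.smul_apply, smul_eq_mul, Finset.sum_mul]
    refine Finset.sum_congr rfl fun j _ => by ring
  rw [heq]
  exact Submodule.smul_mem _ _ (Submodule.subset_span ⟨(k, l), rfl⟩)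

lemma gradW_mem {d m : ℕ} {ι : Type*} [Fintype ι] (lam : ℝ) (data : ι → Sample d)
    (Z V : Mat d) (W : WMat d m) (k : Fin d) (l : Fin m) :
    wRow (gradient (fun W' => trainLoss lam data Z V W') W) k l
      ∈ Submodule.span ℝ
          (Set.range (fun s : ι => attnOut Z V (data s).1.1 (data s).1.2)) := by
  set o : ι → Vec d := fun s => attnOut Z V (data s).1.1 (data s).1.2 with ho
  set v : (Fin d × Fin m) × ι → WMat d m :=
    fun r => WithLp.toLp 2 (fun p : (Fin d × Fin m) × Fin d =>
      (if p.1 = r.1 then (1:ℝ) else 0) * o r.2 p.2) with hv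
  have hinner : ∀ (r : (Fin d × Fin m) × ι) (h : WMat d m),
      @inner ℝ _ _ (v r) h
        = ∑ p : (Fin d × Fin m) × Fin d, (if p.1 = r.1 then (1:ℝ) else 0) * o r.2 p.2 * h p := by
    intro r h
    simp [PiLp.inner_apply, RCLike.inner_apply, starRingEnd_apply, star_trivial, hv]
    exact Finset.sum_congr rfl fun _ _ => by split_ifs <;> ring
  have hinv : ∀ h : WMat d m, (∀ r, @inner ℝ _ _ (v r) h = 0) →
      (fun W' => trainLoss lam data Z V W') (W + h)
        = (fun W' => trainLoss lam data Z V W') W := by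
    intro h hh
    apply trainLoss_W_inv
    intro k' l' s
    have h0 := hh ((k', l'), s)
    rw [hinner] at h0
    calc ∑ i, h ((k', l'), i) * o s i
        = ∑ p : (Fin d × Fin m) × Fin d,
            (if p.1 = (k', l') then (1:ℝ) else 0) * o s p.2 * h p := by
          rw [Fintype.sum_prod_type]
          rw [Finset.sum_eq_single ((k', l'))]
          · refine Finset.sum_congr rfl fun i _ => by simp; ring
          · intro q _ hq
            exact Finset.sum_eq_zero fun i _ => by simp [hq]
          · intro habs; exact absurd (Finset.mem_univ _) habs
      _ = 0 := h0
  have hg := aux_gradient_mem_span (fun W' => trainLoss lam data Z V W') W v hinv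
  refine linmap_span_range (wRowL k l) v _ _ hg ?_
  rintro ⟨⟨k', l'⟩, s⟩
  have heq : wRowL k l (v ((k', l'), s))
      = (if (k, l) = (k', l') then (1:ℝ) else 0) • o s := by
    ext i
    simp only [wRowL, LinearMap.coe_mk, AddHom.coe_mk, wRow, hv,
      PiLp.smul_apply, smul_eq_mul]
  rw [heq]
  exact Submodule.smul_mem _ _ (Submodule.subset_span ⟨s, rfl⟩)

end AuxSpanLemmas
set_option maxHeartbeats 2000000

/-- **Lemma 2 (Span decomposition of the trained parameters).**
In the analogical-reasoning training (any layer-wise gradient-descent schedule on datasets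
whose samples are drawn from `S₁ ∪ S₂ ∪ S₃`), at every iteration `t` the vectors
`V^{(t)}a_i`, `V^{(t)}a'_i`, `V^{(t)}r_q` and `w^{(t)}_{k,l}` are linear combinations of
the initialization vectors `w⁰_{k,l}`, `V⁰a_j`, `V⁰a'_j`, `V⁰r_q` as stated. -/


theorem span_decomposition_of_trained_parameters
    {d N m : ℕ} (lam η : ℝ)
    (a a' : Fin N → Vec d) (r₁ r₂ : Vec d) (Ib Ic : Fin N → Fin d)
    (Z0 V0 : Mat d) (W0 : WMat d m) (T₁ T₂ : ℕ)
    {ι₁ ι₂ : Type} [Fintype ι₁] [Fintype ι₂]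
    (data₁ : ι₁ → Sample d) (data₂ : ι₂ → Sample d)
    (ZT VT : ℕ → Mat d) (WT : ℕ → WMat d m)
    -- the token embeddings form an orthonormal system
    (horth : Orthonormal ℝ (embFam (Ω := Unit) (fun i _ => a i) (fun i _ => a' i)
        (fun _ => r₁) (fun _ => r₂) · ()))
    -- the training datasets are built from S₁, S₂, S₃
    (hdata₁ : ∀ s, data₁ s ∈
        Set.range (fun i => ((a i, r₁), Ib i)) ∪
        Set.range (fun i => ((a' i, r₁), Ib i)) ∪
        Set.range (fun i => ((a' i, r₂), Ic i)))
    (hdata₂ : ∀ s, data₂ s ∈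
        Set.range (fun i => ((a i, r₁), Ib i)) ∪
        Set.range (fun i => ((a' i, r₁), Ib i)) ∪
        Set.range (fun i => ((a' i, r₂), Ic i)))
    -- the layer-wise gradient-descent trajectory
    (hZ0 : ZT 0 = Z0) (hV0 : VT 0 = V0) (hW0 : WT 0 = W0)
    (htraj : IsGDTraj lam η (fun _ : Unit => data₁) (fun _ : Unit => data₂) T₁ T₂
      (fun t _ => ZT t) (fun t _ => VT t) (fun t _ => WT t)) :
    ∀ t, ∃ (γ ρ : Fin N → Fin d → Fin m → ℝ) (ζ : Fin 2 → Fin d → Fin m → ℝ)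
        (β₁ : Fin d → Fin m → Fin d → Fin m → ℝ) (β₂ β₃ : Fin d → Fin m → Fin N → ℝ)
        (β₄ : Fin d → Fin m → Fin 2 → ℝ),
      (∀ i, matVec (VT t) (a i) =
        (∑ k : Fin d, ∑ l : Fin m, γ i k l • wRow W0 k l) + matVec V0 (a i)) ∧
      (∀ i, matVec (VT t) (a' i) =
        (∑ k : Fin d, ∑ l : Fin m, ρ i k l • wRow W0 k l) + matVec V0 (a' i)) ∧
      (matVec (VT t) r₁ =
        (∑ k : Fin d, ∑ l : Fin m, ζ 0 k l • wRow W0 k l) + matVec V0 r₁) ∧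
      (matVec (VT t) r₂ =
        (∑ k : Fin d, ∑ l : Fin m, ζ 1 k l • wRow W0 k l) + matVec V0 r₂) ∧
      (∀ k l, wRow (WT t) k l =
        (∑ q : Fin d, ∑ h : Fin m, β₁ k l q h • wRow W0 q h) +
        (∑ j : Fin N, β₂ k l j • matVec V0 (a j)) +
        (∑ j : Fin N, β₃ k l j • matVec V0 (a' j)) +
        (β₄ k l 0 • matVec V0 r₁ + β₄ k l 1 • matVec V0 r₂)) := by
  classical
  intro t
  set SV : Submodule ℝ (Vec d) :=
    Submodule.span ℝ (Set.range (fun p : Fin d × Fin m => wRow W0 p.1 p.2)) with hSVdef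
  set bigFam : ((Fin d × Fin m) ⊕ ((Fin N ⊕ Fin N) ⊕ Fin 2)) → Vec d :=
    Sum.elim (fun p => wRow W0 p.1 p.2)
      (Sum.elim (Sum.elim (fun j => matVec V0 (a j)) (fun j => matVec V0 (a' j)))
        (fun q => if q = 0 then matVec V0 r₁ else matVec V0 r₂)) with hbig
  set SW : Submodule ℝ (Vec d) := Submodule.span ℝ (Set.range bigFam) with hSWdef
  have hSVW : SV ≤ SW := by
    rw [hSVdef, hSWdef]
    refine Submodule.span_le.mpr ?_
    rintro _ ⟨p, rfl⟩
    exact Submodule.subset_span ⟨Sum.inl p, rfl⟩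
  have hV0aSW : ∀ j, matVec V0 (a j) ∈ SW :=
    fun j => Submodule.subset_span ⟨Sum.inr (Sum.inl (Sum.inl j)), rfl⟩
  have hV0a'SW : ∀ j, matVec V0 (a' j) ∈ SW :=
    fun j => Submodule.subset_span ⟨Sum.inr (Sum.inl (Sum.inr j)), rfl⟩
  have hV0r1SW : matVec V0 r₁ ∈ SW :=
    Submodule.subset_span ⟨Sum.inr (Sum.inr 0), by simp [hbig]⟩
  have hV0r2SW : matVec V0 r₂ ∈ SW :=
    Submodule.subset_span ⟨Sum.inr (Sum.inr 1), by simp [hbig]⟩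
  have hWfr : ∀ t', t' ≤ T₁ → WT t' = W0 := by
    intro t'
    induction t' with
    | zero => intro _; exact hW0
    | succ n ih =>
      intro hle
      have hn : n < T₁ := Nat.lt_of_succ_le hle
      have h := ((htraj () n).1 hn).2.2
      simp only [] at h
      rw [h]
      exact ih hn.le
  have key : ∀ t', (∀ i, matVec (VT t') (a i) - matVec V0 (a i) ∈ SV) ∧
      (∀ i, matVec (VT t') (a' i) - matVec V0 (a' i) ∈ SV) ∧
      (matVec (VT t') r₁ - matVec V0 r₁ ∈ SV) ∧
      (matVec (VT t') r₂ - matVec V0 r₂ ∈ SV) ∧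
      (∀ k l, wRow (WT t') k l ∈ SW) := by
    intro t'
    induction t' with
    | zero =>
      rw [hV0, hW0]
      exact ⟨fun i => by simp, fun i => by simp, by simp, by simp,
        fun k l => Submodule.subset_span ⟨Sum.inl (k, l), rfl⟩⟩
    | succ n ih =>
      obtain ⟨ihA, ihA', ihr1, ihr2, ihW⟩ := ih
      have htokSW : ∀ x : Vec d, matVec (VT n) x - matVec V0 x ∈ SV →
          matVec V0 x ∈ SW → matVec (VT n) x ∈ SW := by
        intro x h1 h2
        have hx : matVec (VT n) x = (matVec (VT n) x - matVec V0 x) + matVec V0 x := by abel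
        rw [hx]
        exact Submodule.add_mem _ (hSVW h1) h2
      by_cases hlt : n < T₁
      · -- Stage 1: V update, W frozen
        obtain ⟨hZe, hVe, hWe⟩ := (htraj () n).1 hlt
        simp only [] at hZe hVe hWe
        have hWn : WT n = W0 := hWfr n hlt.le
        rw [hWn] at hVe
        have hVstep : ∀ x : Vec d, matVec (VT n) x - matVec V0 x ∈ SV →
            matVec (VT (n + 1)) x - matVec V0 x ∈ SV := by
          intro x hx
          rw [hVe, matVec_sub_left, matVec_smul_left, sub_right_comm]
          refine Submodule.sub_mem _ hx (Submodule.smul_mem _ _ ?_)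
          exact gradV_mem lam data₁ (ZT n) (VT n) W0 x
        refine ⟨fun i => hVstep _ (ihA i), fun i => hVstep _ (ihA' i),
          hVstep _ ihr1, hVstep _ ihr2, fun k l => by rw [hWe]; exact ihW k l⟩
      · -- Stage 2/3: V frozen, W update
        have hge : T₁ ≤ n := le_of_not_gt hlt
        obtain ⟨hZe, hVe⟩ := (htraj () n).2.1 hge
        simp only [] at hZe hVe
        have htokVT : ∀ x : Vec d, matVec (VT n) x - matVec V0 x ∈ SV →
            matVec V0 x ∈ SW → matVec (VT n) x ∈ SW := htokSW
        have hAtt : ∀ x₁ x₂ : Vec d, matVec (VT n) x₁ ∈ SW → matVec (VT n) x₂ ∈ SW →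
            attnOut (ZT n) (VT n) x₁ x₂ ∈ SW := by
          intro x₁ x₂ h1 h2
          rw [attnOut, matVec_xAttn]
          exact Submodule.add_mem _ (Submodule.smul_mem _ _ h1) (Submodule.smul_mem _ _ h2)
        have htokOf : ∀ s : Sample d,
            s ∈ Set.range (fun i => ((a i, r₁), Ib i)) ∪
              Set.range (fun i => ((a' i, r₁), Ib i)) ∪
              Set.range (fun i => ((a' i, r₂), Ic i)) →
            attnOut (ZT n) (VT n) s.1.1 s.1.2 ∈ SW := by
          rintro s (( ⟨i, rfl⟩ | ⟨i, rfl⟩ ) | ⟨i, rfl⟩)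
          · exact hAtt _ _ (htokVT _ (ihA i) (hV0aSW i)) (htokVT _ ihr1 hV0r1SW)
          · exact hAtt _ _ (htokVT _ (ihA' i) (hV0a'SW i)) (htokVT _ ihr1 hV0r1SW)
          · exact hAtt _ _ (htokVT _ (ihA' i) (hV0a'SW i)) (htokVT _ ihr2 hV0r2SW)
        have hWstep : ∀ {ι : Type} [Fintype ι] (data : ι → Sample d),
            (∀ s, data s ∈ Set.range (fun i => ((a i, r₁), Ib i)) ∪
              Set.range (fun i => ((a' i, r₁), Ib i)) ∪
              Set.range (fun i => ((a' i, r₂), Ic i))) →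
            ∀ k l, wRow (gradient
              (fun W => trainLoss lam data (ZT n) (VT n) W) (WT n)) k l ∈ SW := by
          intro ι _ data hdata k l
          have hg := gradW_mem lam data (ZT n) (VT n) (WT n) k l
          refine Submodule.span_le.mpr ?_ hg
          rintro _ ⟨s, rfl⟩
          exact htokOf (data s) (hdata s)
        have hVfix : ∀ x : Vec d, matVec (VT (n + 1)) x - matVec V0 x
            = matVec (VT n) x - matVec V0 x := by
          intro x; rw [hVe]
        refine ⟨fun i => by rw [hVfix]; exact ihA i, fun i => by rw [hVfix]; exact ihA' i,
          by rw [hVfix]; exact ihr1, by rw [hVfix]; exact ihr2, ?_⟩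
        intro k l
        by_cases hlt2 : n < T₁ + T₂
        · have hWe := (htraj () n).2.2.1 hge hlt2
          simp only [] at hWe
          rw [hWe, wRow_sub, wRow_smul]
          exact Submodule.sub_mem _ (ihW k l)
            (Submodule.smul_mem _ _ (hWstep data₁ hdata₁ k l))
        · have hWe := (htraj () n).2.2.2 (le_of_not_gt hlt2)
          simp only [] at hWe
          rw [hWe, wRow_sub, wRow_smul]
          exact Submodule.sub_mem _ (ihW k l)
            (Submodule.smul_mem _ _ (hWstep data₂ hdata₂ k l))
  obtain ⟨hA, hA', hr1, hr2, hW⟩ := key t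
  choose cA hcA using fun i => (Submodule.mem_span_range_iff_exists_fun ℝ).mp (hA i)
  choose cA' hcA' using fun i => (Submodule.mem_span_range_iff_exists_fun ℝ).mp (hA' i)
  obtain ⟨c1, hc1⟩ := (Submodule.mem_span_range_iff_exists_fun ℝ).mp hr1
  obtain ⟨c2, hc2⟩ := (Submodule.mem_span_range_iff_exists_fun ℝ).mp hr2
  choose cW hcW using fun k l => (Submodule.mem_span_range_iff_exists_fun ℝ).mp (hW k l)
  refine ⟨fun i k l => cA i (k, l), fun i k l => cA' i (k, l),
    ![fun k l => c1 (k, l), fun k l => c2 (k, l)],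
    fun k l q h => cW k l (Sum.inl (q, h)),
    fun k l j => cW k l (Sum.inr (Sum.inl (Sum.inl j))),
    fun k l j => cW k l (Sum.inr (Sum.inl (Sum.inr j))),
    fun k l q => cW k l (Sum.inr (Sum.inr q)), ?_, ?_, ?_, ?_, ?_⟩
  · intro i
    have h1 := hcA i
    rw [Fintype.sum_prod_type] at h1
    exact sub_eq_iff_eq_add.mp h1.symm
  · intro i
    have h1 := hcA' i
    rw [Fintype.sum_prod_type] at h1
    exact sub_eq_iff_eq_add.mp h1.symm
  · rw [Fintype.sum_prod_type] at hc1
    simp only [Matrix.cons_val_zero]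
    exact sub_eq_iff_eq_add.mp hc1.symm
  · rw [Fintype.sum_prod_type] at hc2
    simp only [Matrix.cons_val_one, Matrix.head_cons]
    exact sub_eq_iff_eq_add.mp hc2.symm
  · intro k l
    have h1 := hcW k l
    rw [Fintype.sum_sum_type] at h1
    rw [Fintype.sum_prod_type] at h1
    rw [Fintype.sum_sum_type] at h1
    rw [Fintype.sum_sum_type] at h1
    rw [Fin.sum_univ_two] at h1
    simp only [hbig, Sum.elim_inl, Sum.elim_inr, reduceIte] at h1
    rw [if_neg (show ¬(1 : Fin 2) = 0 by simp)] at h1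
    rw [← h1]
    simp only []
    abel
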